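/- Let G be a finite simple connected graph of order n with minimum degree δ. Then ((δ+n−1)√(δ(n−1)) / (2(δ² + (n−1)²)))·SDD(G) ≤ AG(G) ≤ (1/2)·SDD(G); the left equality holds if and only if G is isomorphic to the star K_{1,n−1} or to the complete graph K_n, and the right equality holds if and only if G is δ-regular. -/

import Mathlib

open SimpleGraph

/-- The degree of a vertex, as a natural number (classical, to avoid decidability assumptions). -/
noncomputable def ndeg {V : Type*} [Fintype V] (G : SimpleGraph V) (v : V) : ℕ :=
  letI := Classical.decRel G.Adj
  G.degree v

/-- The degree of a vertex, as a real number. -/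
noncomputable def deg {V : Type*} [Fintype V] (G : SimpleGraph V) (v : V) : ℝ :=
  (ndeg G v : ℝ)

/-- For a symmetric function `f`, `edgeSum G f = Σ_{uv ∈ E(G)} f (d_u) (d_v)`:
each unordered edge is counted twice in the double sum, hence the factor `1/2`. -/
noncomputable def edgeSum {V : Type*} [Fintype V] (G : SimpleGraph V) (f : ℝ → ℝ → ℝ) : ℝ :=
  letI := Classical.decRel G.Adj
  (1 / 2) * ∑ u : V, ∑ w : V, if G.Adj u w then f (deg G u) (deg G w) else 0

/-- The arithmetic-geometric index `AG(G) = Σ_{uv ∈ E(G)} (1/2)(√(d_u/d_v) + √(d_v/d_u))`. -/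
noncomputable def AG {V : Type*} [Fintype V] (G : SimpleGraph V) : ℝ :=
  edgeSum G (fun x y => (Real.sqrt (x / y) + Real.sqrt (y / x)) / 2)

/-- The first geometric-arithmetic index `GA(G) = Σ_{uv ∈ E(G)} 2√(d_u d_v)/(d_u + d_v)`. -/
noncomputable def GA {V : Type*} [Fintype V] (G : SimpleGraph V) : ℝ :=
  edgeSum G (fun x y => 2 * Real.sqrt (x * y) / (x + y))

/-- The forgotten index `F(G) = Σ_{uv ∈ E(G)} (d_u² + d_v²)`. -/
noncomputable def forgottenIndex {V : Type*} [Fintype V] (G : SimpleGraph V) : ℝ :=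
  edgeSum G (fun x y => x ^ 2 + y ^ 2)

/-- The first Zagreb index `M₁(G) = Σ_{uv ∈ E(G)} (d_u + d_v)`. -/
noncomputable def M1 {V : Type*} [Fintype V] (G : SimpleGraph V) : ℝ :=
  edgeSum G (fun x y => x + y)

/-- The second Zagreb index `M₂(G) = Σ_{uv ∈ E(G)} d_u d_v`. -/
noncomputable def M2 {V : Type*} [Fintype V] (G : SimpleGraph V) : ℝ :=
  edgeSum G (fun x y => x * y)

/-- The symmetric division deg index `SDD(G) = Σ_{uv ∈ E(G)} (d_u/d_v + d_v/d_u)`. -/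
noncomputable def SDD {V : Type*} [Fintype V] (G : SimpleGraph V) : ℝ :=
  edgeSum G (fun x y => x / y + y / x)

/-- The atom-bond connectivity index `ABC(G) = Σ_{uv ∈ E(G)} √((d_u + d_v − 2)/(d_u d_v))`. -/
noncomputable def ABC {V : Type*} [Fintype V] (G : SimpleGraph V) : ℝ :=
  edgeSum G (fun x y => Real.sqrt ((x + y - 2) / (x * y)))

/-- `G` is `(s,r)`-semiregular: its vertex set is the disjoint union of two nonempty sets,
all vertices of the first having degree `s` and all vertices of the second degree `r`. -/
def IsSemiregular {V : Type*} [Fintype V] (G : SimpleGraph V) (s r : ℕ) : Prop :=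
  ∃ V₁ V₂ : Set V, V₁.Nonempty ∧ V₂.Nonempty ∧ Disjoint V₁ V₂ ∧ V₁ ∪ V₂ = Set.univ ∧
    (∀ v ∈ V₁, ndeg G v = s) ∧ (∀ v ∈ V₂, ndeg G v = r)

set_option maxHeartbeats 1600000
section MyAux


lemma key_upper (x y : ℝ) (hx : 0 < x) (hy : 0 < y) :
    (Real.sqrt (x/y) + Real.sqrt (y/x))/2 ≤ (1/2) * (x/y + y/x) ∧
    ((Real.sqrt (x/y) + Real.sqrt (y/x))/2 = (1/2) * (x/y + y/x) ↔ x = y) := by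
  set s := Real.sqrt x with hs
  set t := Real.sqrt y with ht
  have hs0 : 0 < s := Real.sqrt_pos.2 hx
  have ht0 : 0 < t := Real.sqrt_pos.2 hy
  have hxs : x = s^2 := (Real.sq_sqrt hx.le).symm
  have hyt : y = t^2 := (Real.sq_sqrt hy.le).symm
  have h1 : Real.sqrt (x/y) = s/t := by rw [Real.sqrt_div hx.le]
  have h2 : Real.sqrt (y/x) = t/s := by rw [Real.sqrt_div hy.le]
  rw [h1, h2, hxs, hyt]
  constructor
  · rw [div_le_iff₀ (by norm_num : (0:ℝ) < 2)]
    field_simp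
    nlinarith [mul_nonneg (mul_nonneg (mul_pos hs0 ht0).le (sq_nonneg (s-t))) (by positivity : (0:ℝ) ≤ s^2+s*t+t^2), mul_nonneg (sq_nonneg (s-t)) (by positivity : (0:ℝ) ≤ s^2+s*t+t^2)]
  · constructor
    · intro h
      by_contra hne
      have hst : s ≠ t := by
        intro hh; exact hne (by rw [hh])
      have hpos : (0:ℝ) < (s-t)^2 :=
        lt_of_le_of_ne (sq_nonneg _) (Ne.symm (pow_ne_zero 2 (sub_ne_zero.2 hst)))
      have : (s/t + t/s)/2 < (1/2) * (s^2/t^2 + t^2/s^2) := by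
        rw [div_lt_iff₀ (by norm_num : (0:ℝ) < 2)]
        field_simp
        nlinarith [mul_pos (mul_pos (mul_pos hs0 ht0) hpos) (by positivity : (0:ℝ) < s^2+s*t+t^2), mul_pos hpos (by positivity : (0:ℝ) < s^2+s*t+t^2)]
      linarith [h, this]
    · intro h
      have hst2 : s = t := by rw [← Real.sqrt_sq hs0.le, h, Real.sqrt_sq ht0.le]
      rw [hst2]
      field_simp



lemma key_lower_aux (p q s t : ℝ) (hp0 : 0 < p) (hs0 : 0 < s) (ht0 : 0 < t)
    (hps : p ≤ s) (hsq : s ≤ q) (hpt : p ≤ t) (htq : t ≤ q) :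
    (p^2+q^2) * (p*q) / (2*((p^2)^2+(q^2)^2)) * (s^2/t^2 + t^2/s^2) ≤ (s/t + t/s)/2 ∧
    ((p^2+q^2) * (p*q) / (2*((p^2)^2+(q^2)^2)) * (s^2/t^2 + t^2/s^2) = (s/t + t/s)/2 ↔
      (s = p ∧ t = q) ∨ (s = q ∧ t = p)) := by
  have hq0 : 0 < q := lt_of_lt_of_le hs0 hsq
  obtain ⟨k, hkdef⟩ : ∃ k, k = s/t + t/s := ⟨_, rfl⟩
  obtain ⟨K, hKdef⟩ : ∃ K, K = p/q + q/p := ⟨_, rfl⟩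
  have hk2 : 2 ≤ k := by
    rw [hkdef, div_add_div _ _ ht0.ne' hs0.ne', le_div_iff₀ (by positivity)]
    nlinarith [sq_nonneg (s-t)]
  have hK2 : 2 ≤ K := by
    rw [hKdef, div_add_div _ _ hq0.ne' hp0.ne', le_div_iff₀ (by positivity)]
    nlinarith [sq_nonneg (p-q)]
  have hkK : k ≤ K := by
    rw [hkdef, hKdef, div_add_div _ _ ht0.ne' hs0.ne', div_add_div _ _ hq0.ne' hp0.ne',
      div_le_div_iff₀ (by positivity) (by positivity)]
    nlinarith [mul_nonneg (sub_nonneg.2 (mul_le_mul hps htq ht0.le hs0.le))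
      (sub_nonneg.2 (mul_le_mul hpt hsq hs0.le ht0.le))]
  have hKK : 0 < K^2 - 2 := by nlinarith
  have hKs : K^2 - 2 = (p^4+q^4)/(p^2*q^2) := by
    rw [hKdef]; field_simp; ring
  have hsdd : s^2/t^2 + t^2/s^2 = k^2 - 2 := by rw [hkdef]; field_simp; ring
  have hc0 : (p^2+q^2) * (p*q) / (2*((p^2)^2+(q^2)^2)) = K/(2*(K^2-2)) := by
    rw [hKs, hKdef]; field_simp
  rw [hsdd, hc0, ← hkdef]
  have hmain : K/(2*(K^2-2)) * (k^2-2) ≤ k/2 := by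
    rw [div_mul_eq_mul_div, div_le_div_iff₀ (by positivity) (by norm_num)]
    nlinarith [mul_nonneg (sub_nonneg.2 hkK) (by nlinarith : (0:ℝ) ≤ K*k+2)]
  refine ⟨hmain, ?_, ?_⟩
  · intro h
    rw [div_mul_eq_mul_div, div_eq_div_iff (by positivity) (by norm_num)] at h
    have hkKeq : k = K := by
      have h4 : (K - k) * (K*k + 2) = 0 := by linear_combination (-1/2) * h
      have h5 : (0:ℝ) < K*k+2 := by nlinarith
      rcases mul_eq_zero.1 h4 with h6 | h6
      · linarith [sub_eq_zero.1 h6]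
      · exact absurd h6 h5.ne'
    have hcross : (s*s + t*t) * (q*p) = (p*p + q*q) * (t*s) := by
      have h7 := hkKeq
      rw [hkdef, hKdef, div_add_div _ _ ht0.ne' hs0.ne', div_add_div _ _ hq0.ne' hp0.ne',
        div_eq_div_iff (by positivity) (by positivity)] at h7
      linarith [h7]
    have hfac : (q*s - p*t) * (q*t - p*s) = 0 := by linear_combination -hcross
    rcases mul_eq_zero.1 hfac with h6 | h6
    · have hqs : q*s = p*t := sub_eq_zero.1 h6
      have hsp : s = p := le_antisymm (by nlinarith) hps
      have htq2 : t = q := le_antisymm htq (by nlinarith)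
      exact Or.inl ⟨hsp, htq2⟩
    · have hqt : q*t = p*s := sub_eq_zero.1 h6
      have htp : t = p := le_antisymm (by nlinarith) hpt
      have hsq2 : s = q := le_antisymm hsq (by nlinarith)
      exact Or.inr ⟨hsq2, htp⟩
  · rintro (⟨hsp, htq2⟩ | ⟨hsq2, htp⟩)
    · have hkKeq : k = K := by rw [hkdef, hKdef, hsp, htq2]
      rw [hkKeq]
      rw [div_mul_eq_mul_div, div_eq_div_iff (by positivity) (by norm_num)]
      ring
    · have hkKeq : k = K := by rw [hkdef, hKdef, hsq2, htp, add_comm]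
      rw [hkKeq]
      rw [div_mul_eq_mul_div, div_eq_div_iff (by positivity) (by norm_num)]
      ring

lemma key_lower (a b x y : ℝ) (ha : 0 < a) (hax : a ≤ x) (hxb : x ≤ b) (hay : a ≤ y) (hyb : y ≤ b) :
    (a+b) * Real.sqrt (a*b) / (2*(a^2+b^2)) * (x/y + y/x) ≤ (Real.sqrt (x/y) + Real.sqrt (y/x))/2 ∧
    ((a+b) * Real.sqrt (a*b) / (2*(a^2+b^2)) * (x/y + y/x) = (Real.sqrt (x/y) + Real.sqrt (y/x))/2 ↔
      (x = a ∧ y = b) ∨ (x = b ∧ y = a)) := by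
  have hx : 0 < x := lt_of_lt_of_le ha hax
  have hy : 0 < y := lt_of_lt_of_le ha hay
  have hb : 0 < b := lt_of_lt_of_le hx hxb
  have hp0 : 0 < Real.sqrt a := Real.sqrt_pos.2 ha
  have hq0 : 0 < Real.sqrt b := Real.sqrt_pos.2 hb
  have hs0 : 0 < Real.sqrt x := Real.sqrt_pos.2 hx
  have ht0 : 0 < Real.sqrt y := Real.sqrt_pos.2 hy
  have h1 : Real.sqrt (x/y) = Real.sqrt x / Real.sqrt y := Real.sqrt_div hx.le y
  have h2 : Real.sqrt (y/x) = Real.sqrt y / Real.sqrt x := Real.sqrt_div hy.le x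
  have h3 : Real.sqrt (a*b) = Real.sqrt a * Real.sqrt b := Real.sqrt_mul ha.le b
  have hap : a = (Real.sqrt a)^2 := (Real.sq_sqrt ha.le).symm
  have hbq : b = (Real.sqrt b)^2 := (Real.sq_sqrt hb.le).symm
  have hxs : x = (Real.sqrt x)^2 := (Real.sq_sqrt hx.le).symm
  have hyt : y = (Real.sqrt y)^2 := (Real.sq_sqrt hy.le).symm
  have key := key_lower_aux (Real.sqrt a) (Real.sqrt b) (Real.sqrt x) (Real.sqrt y)
    hp0 hs0 ht0 (Real.sqrt_le_sqrt hax) (Real.sqrt_le_sqrt hxb)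
    (Real.sqrt_le_sqrt hay) (Real.sqrt_le_sqrt hyb)
  rw [h1, h2, h3]
  constructor
  · have := key.1
    rw [← hap, ← hbq, ← hxs, ← hyt] at this
    convert this using 3
  · have hiff := key.2
    rw [← hap, ← hbq, ← hxs, ← hyt] at hiff
    rw [hiff]
    constructor
    · rintro (⟨h5, h6⟩ | ⟨h5, h6⟩)
      · exact Or.inl ⟨by rw [hxs, hap, h5], by rw [hyt, hbq, h6]⟩
      · exact Or.inr ⟨by rw [hxs, hbq, h5], by rw [hyt, hap, h6]⟩
    · rintro (⟨h5, h6⟩ | ⟨h5, h6⟩)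
      · exact Or.inl ⟨by rw [← Real.sqrt_inj hx.le ha.le] at h5; exact h5,
          by rw [← Real.sqrt_inj hy.le hb.le] at h6; exact h6⟩
      · exact Or.inr ⟨by rw [← Real.sqrt_inj hx.le hb.le] at h5; exact h5,
          by rw [← Real.sqrt_inj hy.le ha.le] at h6; exact h6⟩

variable {V : Type*} [Fintype V]

variable {V : Type*} [Fintype V]

lemma my_ndeg_eq_degree (G : SimpleGraph V) [DecidableRel G.Adj] (v : V) :
    ndeg G v = G.degree v := by
  unfold ndeg
  congr!

lemma my_ndeg_pos (G : SimpleGraph V) {v : V} (h : ∃ w, G.Adj v w) : 0 < ndeg G v := by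
  classical
  rw [my_ndeg_eq_degree]
  exact (G.degree_pos_iff_exists_adj v).2 h

lemma my_ndeg_lt_card (G : SimpleGraph V) (v : V) : ndeg G v < Fintype.card V := by
  classical
  rw [my_ndeg_eq_degree]
  exact G.degree_lt_card_verts v

lemma my_exists_adj (G : SimpleGraph V) (hG : G.Connected) (hn : 2 ≤ Fintype.card V)
    (v : V) : ∃ w, G.Adj v w := by
  obtain ⟨w, hw⟩ := Fintype.exists_ne_of_one_lt_card (by omega) v
  obtain ⟨p⟩ := hG.preconnected v w
  cases p with
  | nil => exact absurd rfl (Ne.symm hw)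
  | cons h q => exact ⟨_, h⟩

lemma my_adj_of_ndeg_max (G : SimpleGraph V) {v : V}
    (h : ndeg G v = Fintype.card V - 1) {w : V} (hw : w ≠ v) : G.Adj v w := by
  classical
  rw [my_ndeg_eq_degree] at h
  have hsub : G.neighborFinset v ⊆ Finset.univ.erase v := by
    intro x hx
    rw [mem_neighborFinset] at hx
    exact Finset.mem_erase.2 ⟨(G.ne_of_adj hx).symm, Finset.mem_univ x⟩
  have hcard : (Finset.univ.erase v).card ≤ (G.neighborFinset v).card := by
    rw [Finset.card_erase_of_mem (Finset.mem_univ v), Finset.card_univ,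
      G.card_neighborFinset_eq_degree]
    have := Fintype.card_pos_iff.2 ⟨v⟩
    omega
  have heq := Finset.eq_of_subset_of_card_le hsub hcard
  have hwmem : w ∈ G.neighborFinset v := by
    rw [heq]; exact Finset.mem_erase.2 ⟨hw, Finset.mem_univ w⟩
  rwa [mem_neighborFinset] at hwmem

lemma my_ndeg_max_of_adj_all (G : SimpleGraph V) {v : V}
    (h : ∀ w, w ≠ v → G.Adj v w) : ndeg G v = Fintype.card V - 1 := by
  classical
  rw [my_ndeg_eq_degree, ← G.card_neighborFinset_eq_degree]
  have : G.neighborFinset v = Finset.univ.erase v := by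
    ext w
    rw [mem_neighborFinset, Finset.mem_erase]
    constructor
    · intro hw; exact ⟨(G.ne_of_adj hw).symm, Finset.mem_univ w⟩
    · intro hw; exact h w hw.1
  rw [this, Finset.card_erase_of_mem (Finset.mem_univ v), Finset.card_univ]

lemma my_ndeg_one (G : SimpleGraph V) {v h0 : V}
    (hadj : ∀ w, G.Adj v w ↔ w = h0) : ndeg G v = 1 := by
  classical
  rw [my_ndeg_eq_degree, ← G.card_neighborFinset_eq_degree]
  have : G.neighborFinset v = {h0} := by
    ext w
    rw [mem_neighborFinset, Finset.mem_singleton]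
    exact hadj w
  rw [this, Finset.card_singleton]

lemma my_edgeSum_le (G : SimpleGraph V) {f g : ℝ → ℝ → ℝ}
    (h : ∀ u w, G.Adj u w → f (deg G u) (deg G w) ≤ g (deg G u) (deg G w)) :
    edgeSum G f ≤ edgeSum G g := by
  unfold edgeSum
  refine mul_le_mul_of_nonneg_left ?_ (by norm_num)
  refine Finset.sum_le_sum fun u _ => Finset.sum_le_sum fun w _ => ?_
  split_ifs with h2
  · exact h u w h2
  · exact le_refl 0

lemma my_edgeSum_eq_iff (G : SimpleGraph V) {f g : ℝ → ℝ → ℝ}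
    (h : ∀ u w, G.Adj u w → f (deg G u) (deg G w) ≤ g (deg G u) (deg G w)) :
    (edgeSum G f = edgeSum G g ↔
      ∀ u w, G.Adj u w → f (deg G u) (deg G w) = g (deg G u) (deg G w)) := by
  unfold edgeSum
  rw [mul_right_inj' (by norm_num : (1/2 : ℝ) ≠ 0)]
  rw [← Finset.sum_product', ← Finset.sum_product']
  rw [Finset.sum_eq_sum_iff_of_le (fun i _ => by
    split_ifs with h2
    · exact h i.1 i.2 h2
    · exact le_refl 0)]
  constructor
  · intro H u w hadj
    have := H (u, w) (Finset.mem_product.2 ⟨Finset.mem_univ u, Finset.mem_univ w⟩)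
    simpa [hadj] using this
  · intro H i _
    split_ifs with h2
    · exact H i.1 i.2 h2
    · rfl

lemma my_mul_edgeSum (c : ℝ) (G : SimpleGraph V) (f : ℝ → ℝ → ℝ) :
    c * edgeSum G f = edgeSum G (fun x y => c * f x y) := by
  unfold edgeSum
  rw [← mul_assoc, mul_comm c (1/2 : ℝ), mul_assoc]
  congr 1
  rw [Finset.mul_sum]
  refine Finset.sum_congr rfl fun u _ => ?_
  rw [Finset.mul_sum]
  refine Finset.sum_congr rfl fun w _ => ?_
  split_ifs with h2
  · rfl
  · exact mul_zero c

end MyAux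

/-- Theorem 10 of the paper: comparison of `AG` and `SDD`. -/
theorem stmt16 {V : Type*} [Fintype V] (G : SimpleGraph V) (hG : G.Connected)
    (n δ : ℕ) (hn : Fintype.card V = n) (hn2 : 2 ≤ n)
    (hδ : IsLeast (Set.range (ndeg G)) δ) :
    (((((δ : ℝ) + n - 1) * Real.sqrt ((δ : ℝ) * ((n : ℝ) - 1))) /
        (2 * ((δ : ℝ) ^ 2 + ((n : ℝ) - 1) ^ 2))) * SDD G ≤ AG G ∧
      AG G ≤ (1 / 2) * SDD G) ∧
    (((((δ : ℝ) + n - 1) * Real.sqrt ((δ : ℝ) * ((n : ℝ) - 1))) /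
        (2 * ((δ : ℝ) ^ 2 + ((n : ℝ) - 1) ^ 2))) * SDD G = AG G ↔
      Nonempty (G ≃g completeBipartiteGraph (Fin 1) (Fin (n - 1))) ∨
      Nonempty (G ≃g (⊤ : SimpleGraph (Fin n)))) ∧
    (AG G = (1 / 2) * SDD G ↔ ∀ v : V, ndeg G v = δ) := by
  classical
  obtain ⟨v₀, hv₀⟩ := hδ.1
  have hδle : ∀ v, δ ≤ ndeg G v := fun v => hδ.2 ⟨v, rfl⟩
  have hcard2 : 2 ≤ Fintype.card V := by omega
  have hδ1 : 1 ≤ δ := by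
    have := my_ndeg_pos G (my_exists_adj G hG hcard2 v₀)
    omega
  have hub : ∀ v, ndeg G v ≤ n - 1 := fun v => by
    have := my_ndeg_lt_card G v; omega
  have hδn : δ ≤ n - 1 := hv₀ ▸ hub v₀
  set a : ℝ := (δ : ℝ) with hadef
  set b : ℝ := (n : ℝ) - 1 with hbdef
  have hb' : ((n - 1 : ℕ) : ℝ) = b := by
    rw [hbdef, Nat.cast_sub (by omega : 1 ≤ n), Nat.cast_one]
  have ha0 : 0 < a := by
    rw [hadef]; exact_mod_cast Nat.lt_of_lt_of_le Nat.zero_lt_one hδ1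
  have hdeg_lb : ∀ v, a ≤ deg G v := fun v => by
    rw [hadef]; unfold deg; exact_mod_cast hδle v
  have hdeg_ub : ∀ v, deg G v ≤ b := fun v => by
    rw [← hb']; unfold deg; exact_mod_cast hub v
  have hdpos : ∀ v, 0 < deg G v := fun v => lt_of_lt_of_le ha0 (hdeg_lb v)
  have hceq : (((δ : ℝ) + n - 1) * Real.sqrt ((δ : ℝ) * ((n : ℝ) - 1))) /
        (2 * ((δ : ℝ) ^ 2 + ((n : ℝ) - 1) ^ 2))
      = (a + b) * Real.sqrt (a * b) / (2 * (a ^ 2 + b ^ 2)) := by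
    rw [hadef, hbdef]; ring_nf
  have c1 : ∀ v, deg G v = a ↔ ndeg G v = δ := fun v => by
    rw [hadef]; unfold deg; exact Nat.cast_inj
  have c2 : ∀ v, deg G v = b ↔ ndeg G v = n - 1 := fun v => by
    rw [← hb']; unfold deg; exact Nat.cast_inj
  -- upper bound and its equality case
  have hupper : AG G ≤ (1 / 2) * SDD G := by
    rw [AG, SDD, my_mul_edgeSum]
    exact my_edgeSum_le G fun u w h => (key_upper _ _ (hdpos u) (hdpos w)).1
  have hiff3 : AG G = (1 / 2) * SDD G ↔ ∀ v, ndeg G v = δ := by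
    rw [AG, SDD, my_mul_edgeSum,
      my_edgeSum_eq_iff G (fun u w h => (key_upper _ _ (hdpos u) (hdpos w)).1)]
    constructor
    · intro H v
      have hconst : ∀ x y : V, ndeg G x = ndeg G y := by
        intro x y
        obtain ⟨p⟩ := hG.preconnected x y
        induction p with
        | nil => rfl
        | @cons x' y' z' hadj q ih =>
          have hd := (key_upper _ _ (hdpos x') (hdpos y')).2.1 (H x' y' hadj)
          unfold deg at hd
          have hnd : ndeg G x' = ndeg G y' := Nat.cast_injective hd
          rw [hnd, ih]
      rw [hconst v v₀, hv₀]
    · intro H u w hadj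
      have hd : deg G u = deg G w := by unfold deg; rw [H u, H w]
      exact (key_upper _ _ (hdpos u) (hdpos w)).2.2 hd
  -- lower bound
  have hlower : (((δ : ℝ) + n - 1) * Real.sqrt ((δ : ℝ) * ((n : ℝ) - 1))) /
      (2 * ((δ : ℝ) ^ 2 + ((n : ℝ) - 1) ^ 2)) * SDD G ≤ AG G := by
    rw [hceq, AG, SDD, my_mul_edgeSum]
    exact my_edgeSum_le G fun u w h =>
      (key_lower a b _ _ ha0 (hdeg_lb u) (hdeg_ub u) (hdeg_lb w) (hdeg_ub w)).1
  -- equality case of the lower bound, reduced to a combinatorial condition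
  have h2 : ((((δ : ℝ) + n - 1) * Real.sqrt ((δ : ℝ) * ((n : ℝ) - 1))) /
        (2 * ((δ : ℝ) ^ 2 + ((n : ℝ) - 1) ^ 2)) * SDD G = AG G) ↔
      ∀ u w, G.Adj u w →
        ((ndeg G u = δ ∧ ndeg G w = n - 1) ∨ (ndeg G u = n - 1 ∧ ndeg G w = δ)) := by
    rw [hceq, AG, SDD, my_mul_edgeSum,
      my_edgeSum_eq_iff G (fun u w h =>
        (key_lower a b _ _ ha0 (hdeg_lb u) (hdeg_ub u) (hdeg_lb w) (hdeg_ub w)).1)]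
    refine forall_congr' fun u => forall_congr' fun w => imp_congr_right fun _ => ?_
    rw [(key_lower a b _ _ ha0 (hdeg_lb u) (hdeg_ub u) (hdeg_lb w) (hdeg_ub w)).2,
      c1 u, c2 w, c2 u, c1 w]
  -- structural characterization
  have htopQ : (∀ v w : V, v ≠ w → G.Adj v w) →
      Nonempty (G ≃g (⊤ : SimpleGraph (Fin n))) := by
    intro hall
    refine ⟨⟨Fintype.equivFinOfCardEq hn, @fun u w => ?_⟩⟩
    simp only [SimpleGraph.top_adj, ne_eq, EmbeddingLike.apply_eq_iff_eq]
    exact ⟨fun hne => hall u w hne, fun hadj => G.ne_of_adj hadj⟩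
  have hstarIso : (∃ h0 : V, ∀ x y : V, G.Adj x y ↔
        ((x = h0 ∧ y ≠ h0) ∨ (y = h0 ∧ x ≠ h0))) →
      Nonempty (G ≃g completeBipartiteGraph (Fin 1) (Fin (n - 1))) := by
    rintro ⟨h0, hchar⟩
    have e2 : {v : V // v = h0} ≃ Fin 1 :=
      Fintype.equivFinOfCardEq (Fintype.card_subtype_eq h0)
    have e3 : {v : V // ¬ v = h0} ≃ Fin (n - 1) :=
      Fintype.equivFinOfCardEq (by
        rw [Fintype.card_subtype_compl, Fintype.card_subtype_eq, hn])
    refine ⟨⟨(Equiv.sumCompl (· = h0)).symm.trans (Equiv.sumCongr e2 e3), @fun x y => ?_⟩⟩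
    rw [hchar x y]
    by_cases hx : x = h0 <;> by_cases hy : y = h0 <;>
      simp [Equiv.sumCompl_symm_apply_of_pos, Equiv.sumCompl_symm_apply_of_neg,
        hx, hy]
  refine ⟨⟨hlower, hupper⟩, ?_, hiff3⟩
  rw [h2]
  constructor
  · intro hQ
    by_cases hcase : δ = n - 1
    · refine Or.inr (htopQ fun v w hvw => ?_)
      have hv : ndeg G v = Fintype.card V - 1 := by
        rw [hn]
        have := hδle v
        have := hub v
        omega
      exact my_adj_of_ndeg_max G hv (Ne.symm hvw)
    · obtain ⟨w₀, hw0adj⟩ := my_exists_adj G hG hcard2 v₀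
      have hw₀ : ndeg G w₀ = n - 1 := by
        rcases hQ v₀ w₀ hw0adj with ⟨h1, hr⟩ | ⟨h1, hr⟩
        · exact hr
        · rw [hv₀] at h1; omega
      have hhubadj : ∀ u, u ≠ w₀ → G.Adj w₀ u := fun u hu =>
        my_adj_of_ndeg_max G (by rw [hw₀, hn]) hu
      have hother : ∀ u, u ≠ w₀ → ndeg G u = δ := by
        intro u hu
        rcases hQ u w₀ (hhubadj u hu).symm with ⟨h1, hr⟩ | ⟨h1, hr⟩
        · exact h1
        · rw [hw₀] at hr; omega
      refine Or.inl (hstarIso ⟨w₀, fun x y => ?_⟩)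
      constructor
      · intro hadj
        by_cases hx : x = w₀
        · refine Or.inl ⟨hx, fun hy => ?_⟩
          exact G.ne_of_adj hadj (hx.trans hy.symm)
        · refine Or.inr ⟨?_, hx⟩
          by_contra hy
          rcases hQ x y hadj with ⟨h1, hr⟩ | ⟨h1, hr⟩
          · have := hother y hy; omega
          · have := hother x hx; omega
      · rintro (⟨rfl, hy⟩ | ⟨rfl, hx⟩)
        · exact hhubadj y hy
        · exact (hhubadj x hx).symm
  · rintro (he | he) <;> obtain ⟨e⟩ := he
    · -- star case
      set h0 := e.symm (Sum.inl 0) with hh0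
      have hleft : ∀ x : V, (∃ z, e x = Sum.inl z) ↔ x = h0 := by
        intro x
        constructor
        · rintro ⟨z, hz⟩
          have hz0 : z = 0 := Subsingleton.elim _ _
          rw [hz0] at hz
          rw [hh0, ← hz, RelIso.symm_apply_apply]
        · rintro rfl
          exact ⟨0, by rw [hh0, RelIso.apply_symm_apply]⟩
      have hchar : ∀ x y : V, G.Adj x y ↔
          ((x = h0 ∧ y ≠ h0) ∨ (y = h0 ∧ x ≠ h0)) := by
        intro x y
        rw [← e.map_rel_iff]
        have hx := hleft x
        have hy := hleft y
        rcases hex : e x with z | z <;> rcases hey : e y with z' | z'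
        · have hx' : x = h0 := hx.1 ⟨_, hex⟩
          have hy' : y = h0 := hy.1 ⟨_, hey⟩
          simp [hex, hey, hx', hy']
        · have hx' : x = h0 := hx.1 ⟨_, hex⟩
          have hy' : y ≠ h0 := fun h => by
            obtain ⟨zz, hzz⟩ := hy.2 h
            rw [hey] at hzz
            simp at hzz
          simp [hex, hey, hx', hy']
        · have hx' : x ≠ h0 := fun h => by
            obtain ⟨zz, hzz⟩ := hx.2 h
            rw [hex] at hzz
            simp at hzz
          have hy' : y = h0 := hy.1 ⟨_, hey⟩
          simp [hex, hey, hx', hy']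
        · have hx' : x ≠ h0 := fun h => by
            obtain ⟨zz, hzz⟩ := hx.2 h
            rw [hex] at hzz
            simp at hzz
          have hy' : y ≠ h0 := fun h => by
            obtain ⟨zz, hzz⟩ := hy.2 h
            rw [hey] at hzz
            simp at hzz
          simp [hex, hey, hx', hy']
      have hnh : ndeg G h0 = n - 1 := by
        rw [my_ndeg_max_of_adj_all G (fun w hw => (hchar h0 w).2 (Or.inl ⟨rfl, hw⟩)), hn]
      have hone : ∀ u, u ≠ h0 → ndeg G u = 1 := by
        intro u hu
        refine my_ndeg_one G (h0 := h0) fun w => ?_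
        rw [hchar u w]
        constructor
        · rintro (⟨h1, h2⟩ | ⟨h1, h2⟩)
          · exact absurd h1 hu
          · exact h1
        · rintro rfl
          exact Or.inr ⟨rfl, hu⟩
      have hδeq : δ = 1 := by
        obtain ⟨u, hu⟩ := Fintype.exists_ne_of_one_lt_card (by omega) h0
        have := hδle u
        have := hone u hu
        omega
      intro u w hadj
      rcases (hchar u w).1 hadj with ⟨rfl, hw⟩ | ⟨rfl, hu⟩
      · exact Or.inr ⟨hnh, by rw [hone w hw, hδeq]⟩
      · exact Or.inl ⟨by rw [hone u hu, hδeq], hnh⟩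
    · -- complete case
      have hall : ∀ x y : V, x ≠ y → G.Adj x y := by
        intro x y hxy
        refine e.map_rel_iff.1 ?_
        simp only [SimpleGraph.top_adj, ne_eq]
        exact fun h => hxy (e.toEquiv.injective h)
      have hall' : ∀ v, ndeg G v = n - 1 := fun v => by
        rw [my_ndeg_max_of_adj_all G (fun w hw => hall v w (Ne.symm hw)), hn]
      have hδeq : δ = n - 1 := hv₀.symm.trans (hall' v₀)
      intro u w hadj
      exact Or.inl ⟨(hall' u).trans hδeq.symm, hall' w⟩
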